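/- Inactive leakage constraints (Corollary 1). Let (U₀,U₁,U₂,Y₁,Y₂) be random variables taking values in finite sets, and let L₁, L₂ ≥ 0. For these fixed random variables, define R̃(L₁,L₂) ⊆ ℝ₊² as the set of pairs (R₁,R₂) ∈ ℝ₊² satisfying all of: (i) R₁ ≤ I(U₁;Y₁|U₀) − I(U₁;U₂|U₀) − I(U₁;Y₂|U₀,U₂) + L₁; (ii) R₁ ≤ I(U₀,U₁;Y₁); (iii) R₂ ≤ I(U₂;Y₂|U₀) − I(U₁;U₂|U₀) − I(U₂;Y₁|U₀,U₁) + L₂; (iv) R₂ ≤ I(U₀,U₂;Y₂); (v) R₁+R₂ ≤ I(U₀,U₁;Y₁) + I(U₂;Y₂|U₀) − I(U₁;U₂|U₀) − I(U₁;Y₂|U₀,U₂) + L₁; (vi) R₁+R₂ ≤ I(U₀,U₁;Y₁) + I(U₂;Y₂|U₀) − I(U₁;U₂|U₀); (vii) R₁+R₂ ≤ I(U₁;Y₁|U₀) + I(U₀,U₂;Y₂) − I(U₁;U₂|U₀) − I(U₂;Y₁|U₀,U₁) + L₂; (viii) R₁+R₂ ≤ I(U₁;Y₁|U₀) + I(U₀,U₂;Y₂)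 − I(U₁;U₂|U₀). Let R̃(∞,L₂) be the set defined by dropping constraints (i) and (v), R̃(L₁,∞) by dropping (iii) and (vii), and R̃(∞,∞) by dropping (i), (iii), (v) and (vii). Define L₁* = I(U₀;Y₁) + I(U₁;U₂,Y₂|U₀) and L₂* = I(U₀;Y₂) + I(U₂;U₁,Y₁|U₀). Then: (1) if L₁ ≥ L₁* then R̃(L₁,L₂) = R̃(∞,L₂); (2) if L₂ ≥ L₂* then R̃(L₁,L₂) = R̃(L₁,∞); (3) if L₁ ≥ L₁* and L₂ ≥ L₂* then R̃(L₁,L₂) = R̃(∞,∞). -/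

import Mathlib

open scoped Classical BigOperators

noncomputable section

/-- Entropy (base 2) of a finitely supported distribution given as a function. -/
def entFun {α : Type} [Fintype α] (q : α → ℝ) : ℝ :=
  -∑ a, q a * Real.logb 2 (q a)

/-- Distribution (pushforward) of the random variable `A` under the pmf `p`. -/
def distOf {Ω α : Type} [Fintype Ω] [Fintype α] (p : Ω → ℝ) (A : Ω → α) : α → ℝ :=
  fun a => ∑ ω, if A ω = a then p ω else 0

/-- Shannon entropy `H(A)` (base 2). -/
def Hent {Ω α : Type} [Fintype Ω] [Fintype α] (p : Ω → ℝ) (A : Ω → α) : ℝ :=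
  entFun (distOf p A)

/-- Conditional entropy `H(A|B)`. -/
def CHent {Ω α β : Type} [Fintype Ω] [Fintype α] [Fintype β]
    (p : Ω → ℝ) (A : Ω → α) (B : Ω → β) : ℝ :=
  Hent p (fun ω => (A ω, B ω)) - Hent p B

/-- Mutual information `I(A;B)`. -/
def MI {Ω α β : Type} [Fintype Ω] [Fintype α] [Fintype β]
    (p : Ω → ℝ) (A : Ω → α) (B : Ω → β) : ℝ :=
  Hent p A + Hent p B - Hent p (fun ω => (A ω, B ω))

/-- Conditional mutual information `I(A;B|C)`. -/
def CMI {Ω α β γ : Type} [Fintype Ω] [Fintype α] [Fintype β] [Fintype γ]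
    (p : Ω → ℝ) (A : Ω → α) (B : Ω → β) (C : Ω → γ) : ℝ :=
  Hent p (fun ω => (A ω, C ω)) + Hent p (fun ω => (B ω, C ω))
    - Hent p (fun ω => (A ω, B ω, C ω)) - Hent p C

/-- `p` is a probability mass function on the finite type `α`. -/
def IsPMF {α : Type} [Fintype α] (p : α → ℝ) : Prop :=
  (∀ a, 0 ≤ p a) ∧ ∑ a, p a = 1

/-- The region `R̃(L1,L2)` of Corollary 1, where a leakage threshold of `none`
means the corresponding leakage constraints are dropped (i.e. `L = ∞`). -/
def RtOpt {Ω A0 A1 A2 B1 B2 : Type} [Fintype Ω] [Fintype A0] [Fintype A1]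
    [Fintype A2] [Fintype B1] [Fintype B2] (p : Ω → ℝ)
    (U0 : Ω → A0) (U1 : Ω → A1) (U2 : Ω → A2) (Y1 : Ω → B1) (Y2 : Ω → B2)
    (L1 L2 : Option ℝ) : Set (ℝ × ℝ) :=
  {r : ℝ × ℝ | 0 ≤ r.1 ∧ 0 ≤ r.2 ∧
    (∀ l1 ∈ L1,
      r.1 ≤ CMI p U1 Y1 U0 - CMI p U1 U2 U0
          - CMI p U1 Y2 (fun ω => (U0 ω, U2 ω)) + l1 ∧
      r.1 + r.2 ≤ MI p (fun ω => (U0 ω, U1 ω)) Y1 + CMI p U2 Y2 U0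
          - CMI p U1 U2 U0 - CMI p U1 Y2 (fun ω => (U0 ω, U2 ω)) + l1) ∧
    (∀ l2 ∈ L2,
      r.2 ≤ CMI p U2 Y2 U0 - CMI p U1 U2 U0
          - CMI p U2 Y1 (fun ω => (U0 ω, U1 ω)) + l2 ∧
      r.1 + r.2 ≤ CMI p U1 Y1 U0 + MI p (fun ω => (U0 ω, U2 ω)) Y2
          - CMI p U1 U2 U0 - CMI p U2 Y1 (fun ω => (U0 ω, U1 ω)) + l2) ∧
    r.1 ≤ MI p (fun ω => (U0 ω, U1 ω)) Y1 ∧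
    r.2 ≤ MI p (fun ω => (U0 ω, U2 ω)) Y2 ∧
    r.1 + r.2 ≤ MI p (fun ω => (U0 ω, U1 ω)) Y1 + CMI p U2 Y2 U0 - CMI p U1 U2 U0 ∧
    r.1 + r.2 ≤ CMI p U1 Y1 U0 + MI p (fun ω => (U0 ω, U2 ω)) Y2 - CMI p U1 U2 U0}

lemma sum_distOf_mul {Ω α : Type} [Fintype Ω] [Fintype α] (p : Ω → ℝ) (X : Ω → α) (g : α → ℝ) :
    ∑ x, distOf p X x * g x = ∑ ω, p ω * g (X ω) := by
  unfold distOf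
  simp_rw [Finset.sum_mul, ite_mul, zero_mul]
  rw [Finset.sum_comm]
  simp

lemma distOf_nonneg {Ω α : Type} [Fintype Ω] [Fintype α] {p : Ω → ℝ} (hp : ∀ ω, 0 ≤ p ω)
    (X : Ω → α) (a : α) : 0 ≤ distOf p X a := by
  apply Finset.sum_nonneg
  intro ω _
  split <;> simp [hp ω]



lemma le_distOf {Ω α : Type} [Fintype Ω] [Fintype α] {p : Ω → ℝ} (hp : ∀ ω, 0 ≤ p ω)
    (X : Ω → α) (ω : Ω) : p ω ≤ distOf p X (X ω) := by
  unfold distOf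
  have := Finset.single_le_sum (f := fun ω' => if X ω' = X ω then p ω' else 0)
    (fun i _ => by split <;> simp [hp i]) (Finset.mem_univ ω)
  simpa using this

lemma sum_distOf {Ω α : Type} [Fintype Ω] [Fintype α] (p : Ω → ℝ) (X : Ω → α) :
    ∑ a, distOf p X a = ∑ ω, p ω := by
  have := sum_distOf_mul p X (fun _ => 1)
  simpa using this

lemma Hent_comp {Ω α β : Type} [Fintype Ω] [Fintype α] [Fintype β]
    (p : Ω → ℝ) {f : α → β} (hf : Function.Injective f) (A : Ω → α) :
    Hent p (fun ω => f (A ω)) = Hent p A := by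
  unfold Hent entFun
  congr 1
  rw [← Finset.sum_subset (Finset.subset_univ (Finset.univ.image f))
    (by
      intro b _ hb
      have h0 : distOf p (fun ω => f (A ω)) b = 0 := by
        unfold distOf
        apply Finset.sum_eq_zero
        intro ω _
        have : f (A ω) ≠ b := by
          intro h; exact hb (Finset.mem_image.2 ⟨A ω, Finset.mem_univ _, h⟩)
        simp [this]
      simp [h0])]
  rw [Finset.sum_image (fun a _ b _ h => hf h)]
  apply Finset.sum_congr rfl
  intro a _
  have : distOf p (fun ω => f (A ω)) (f a) = distOf p A a := by
    unfold distOf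
    apply Finset.sum_congr rfl
    intro ω _
    simp [hf.eq_iff]
  rw [this]

lemma Hent_congr {Ω α β : Type} [Fintype Ω] [Fintype α] [Fintype β]
    (p : Ω → ℝ) {X : Ω → α} {Y : Ω → β} (f : α → β)
    (hf : Function.Injective f) (h : ∀ ω, f (X ω) = Y ω) :
    Hent p X = Hent p Y := by
  rw [← Hent_comp p hf X]
  congr 1
  funext ω
  rw [h]

lemma Hent_eq_sum {Ω α : Type} [Fintype Ω] [Fintype α] (p : Ω → ℝ) (X : Ω → α) :
    Hent p X = -∑ ω, p ω * Real.logb 2 (distOf p X (X ω)) := by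
  unfold Hent entFun
  rw [sum_distOf_mul p X (fun x => Real.logb 2 (distOf p X x))]

lemma marg_fst {Ω α γ : Type} [Fintype Ω] [Fintype α] [Fintype γ] (p : Ω → ℝ)
    (A : Ω → α) (C : Ω → γ) (c : γ) :
    ∑ a, distOf p (fun ω => (A ω, C ω)) (a, c) = distOf p C c := by
  unfold distOf
  rw [Finset.sum_comm]
  apply Finset.sum_congr rfl
  intro ω _
  by_cases h : C ω = c <;> simp [Prod.ext_iff, h]

lemma distOf_apply_le {Ω α β : Type} [Fintype Ω] [Fintype α] [Fintype β]
    {p : Ω → ℝ} (hp0 : ∀ ω, 0 ≤ p ω) (X : Ω → α) (f : α → β) (a : α) :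
    distOf p X a ≤ distOf p (fun ω => f (X ω)) (f a) := by
  apply Finset.sum_le_sum
  intro ω _
  dsimp only
  by_cases h : X ω = a
  · simp [h]
  · simp only [h, if_false]
    split <;> simp [hp0 ω]

lemma CMI_nonneg {Ω α β γ : Type} [Fintype Ω] [Fintype α] [Fintype β] [Fintype γ]
    {p : Ω → ℝ} (hp : IsPMF p) (A : Ω → α) (B : Ω → β) (C : Ω → γ) :
    0 ≤ CMI p A B C := by
  obtain ⟨hp0, hp1⟩ := hp
  set dABC := distOf p (fun ω => (A ω, B ω, C ω)) with hdABC
  set dAC := distOf p (fun ω => (A ω, C ω)) with hdAC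
  set dBC := distOf p (fun ω => (B ω, C ω)) with hdBC
  set dC := distOf p C with hdC
  have hc : (0:ℝ) < Real.log 2 := Real.log_pos (by norm_num)
  set G : α × β × γ → ℝ :=
    fun x => dAC (x.1, x.2.2) * dBC (x.2.1, x.2.2) / (dABC x * dC x.2.2) with hG
  have key : CMI p A B C = ∑ ω, (p ω * Real.logb 2 (dABC (A ω, B ω, C ω))
      + p ω * Real.logb 2 (dC (C ω)) - p ω * Real.logb 2 (dAC (A ω, C ω))
      - p ω * Real.logb 2 (dBC (B ω, C ω))) := by
    unfold CMI
    rw [Hent_eq_sum p (fun ω => (A ω, C ω)), Hent_eq_sum p (fun ω => (B ω, C ω)),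
      Hent_eq_sum p (fun ω => (A ω, B ω, C ω)), Hent_eq_sum p C]
    simp only [Finset.sum_sub_distrib, Finset.sum_add_distrib]
    ring
  -- termwise bound
  have hterm : ∀ ω, (p ω - p ω * G (A ω, B ω, C ω)) / Real.log 2 ≤
      p ω * Real.logb 2 (dABC (A ω, B ω, C ω)) + p ω * Real.logb 2 (dC (C ω))
      - p ω * Real.logb 2 (dAC (A ω, C ω)) - p ω * Real.logb 2 (dBC (B ω, C ω)) := by
    intro ω
    rcases eq_or_lt_of_le (hp0 ω) with h0 | h0
    · simp [← h0]
    · have h1 : 0 < dABC (A ω, B ω, C ω) :=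
        lt_of_lt_of_le h0 (le_distOf hp0 (fun ω => (A ω, B ω, C ω)) ω)
      have h2 : 0 < dAC (A ω, C ω) :=
        lt_of_lt_of_le h0 (le_distOf hp0 (fun ω => (A ω, C ω)) ω)
      have h3 : 0 < dBC (B ω, C ω) :=
        lt_of_lt_of_le h0 (le_distOf hp0 (fun ω => (B ω, C ω)) ω)
      have h4 : 0 < dC (C ω) := lt_of_lt_of_le h0 (le_distOf hp0 C ω)
      set x : ℝ := G (A ω, B ω, C ω) with hx
      have hxpos : 0 < x := by
        rw [hx, hG]
        positivity
      have hlogx : Real.log x = Real.log (dAC (A ω, C ω)) + Real.log (dBC (B ω, C ω))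
          - Real.log (dABC (A ω, B ω, C ω)) - Real.log (dC (C ω)) := by
        rw [hx, hG]
        rw [Real.log_div (by positivity) (by positivity),
          Real.log_mul (ne_of_gt h2) (ne_of_gt h3),
          Real.log_mul (ne_of_gt h1) (ne_of_gt h4)]
        ring
      have hle : Real.log x ≤ x - 1 := Real.log_le_sub_one_of_pos hxpos
      have hmul : p ω * Real.log x ≤ p ω * (x - 1) :=
        mul_le_mul_of_nonneg_left hle (le_of_lt h0)
      have goal_eq : p ω * Real.logb 2 (dABC (A ω, B ω, C ω))
          + p ω * Real.logb 2 (dC (C ω)) - p ω * Real.logb 2 (dAC (A ω, C ω))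
          - p ω * Real.logb 2 (dBC (B ω, C ω)) = (p ω * (- Real.log x)) / Real.log 2 := by
        simp only [Real.logb]
        rw [hlogx]
        field_simp
        ring
      rw [goal_eq]
      apply div_le_div_of_nonneg_right ?_ hc.le
      linarith [hmul]
  -- sum of p ω * G ≤ 1
  have hS : ∑ ω, p ω * G (A ω, B ω, C ω) ≤ 1 := by
    have e1 : ∑ ω, p ω * G (A ω, B ω, C ω) = ∑ x, dABC x * G x :=
      (sum_distOf_mul p (fun ω => (A ω, B ω, C ω)) G).symm
    rw [e1]
    have e2 : ∀ x : α × β × γ, dABC x * G x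
        ≤ dAC (x.1, x.2.2) * dBC (x.2.1, x.2.2) / dC x.2.2 := by
      intro x
      rcases eq_or_lt_of_le (show (0:ℝ) ≤ dABC x from distOf_nonneg hp0 _ x) with h | h
      · rw [← h]
        simp only [zero_mul]
        exact div_nonneg (mul_nonneg (distOf_nonneg hp0 _ _) (distOf_nonneg hp0 _ _))
          (distOf_nonneg hp0 _ _)
      · have hdc : 0 < dC x.2.2 := by
          have hle := distOf_apply_le hp0 (fun ω => (A ω, B ω, C ω))
            (fun y : α × β × γ => y.2.2) x
          exact lt_of_lt_of_le h (le_trans hle (le_of_eq rfl))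
        have : dABC x * G x = dAC (x.1, x.2.2) * dBC (x.2.1, x.2.2) / dC x.2.2 := by
          rw [hG]
          field_simp
        rw [this]
    calc ∑ x, dABC x * G x
        ≤ ∑ x : α × β × γ, dAC (x.1, x.2.2) * dBC (x.2.1, x.2.2) / dC x.2.2 :=
          Finset.sum_le_sum (fun x _ => e2 x)
      _ = ∑ y : γ × α × β, dAC (y.2.1, y.1) * dBC (y.2.2, y.1) / dC y.1 :=
          Fintype.sum_equiv
            ⟨fun x => (x.2.2, x.1, x.2.1), fun y => (y.2.1, y.2.2, y.1),
              fun x => rfl, fun y => rfl⟩ _ _ (fun x => rfl)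
      _ = ∑ c, ∑ a, ∑ b, dAC (a, c) * dBC (b, c) / dC c := by
          rw [Fintype.sum_prod_type]
          exact Finset.sum_congr rfl (fun c _ => Fintype.sum_prod_type _)
      _ ≤ ∑ c, dC c := by
          apply Finset.sum_le_sum
          intro c _
          have hinner : ∑ a, ∑ b, dAC (a, c) * dBC (b, c) / dC c
              = (∑ a, dAC (a, c)) * (∑ b, dBC (b, c)) / dC c := by
            rw [Finset.sum_mul, Finset.sum_div]
            apply Finset.sum_congr rfl
            intro a _
            rw [Finset.mul_sum, Finset.sum_div]
          rw [hinner, marg_fst p A C c, marg_fst p B C c]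
          rcases eq_or_lt_of_le (show (0:ℝ) ≤ dC c from distOf_nonneg hp0 _ c) with h | h
          · rw [← h]
            simp
          · rw [mul_div_assoc, div_self (ne_of_gt h), mul_one]
      _ = 1 := by rw [sum_distOf, hp1]
  have hlow : (1 - ∑ ω, p ω * G (A ω, B ω, C ω)) / Real.log 2 ≤ CMI p A B C := by
    rw [key]
    have hsum := Finset.sum_le_sum (s := Finset.univ) (fun ω _ => hterm ω)
    calc (1 - ∑ ω, p ω * G (A ω, B ω, C ω)) / Real.log 2
        = ∑ ω, (p ω - p ω * G (A ω, B ω, C ω)) / Real.log 2 := by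
          rw [← Finset.sum_div, Finset.sum_sub_distrib, hp1]
      _ ≤ _ := hsum
  have : 0 ≤ (1 - ∑ ω, p ω * G (A ω, B ω, C ω)) / Real.log 2 :=
    div_nonneg (by linarith) hc.le
  linarith

lemma MI_eq_CMI {Ω α β : Type} [Fintype Ω] [Fintype α] [Fintype β]
    {p : Ω → ℝ} (hp : IsPMF p) (A : Ω → α) (B : Ω → β) :
    MI p A B = CMI p A B (fun _ => ()) := by
  unfold MI CMI
  have h1 : Hent p (fun ω => (A ω, ())) = Hent p A :=
    Hent_comp p (f := fun a : α => (a, ())) (fun a b h => by simpa using h) A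
  have h2 : Hent p (fun ω => (B ω, ())) = Hent p B :=
    Hent_comp p (f := fun b : β => (b, ())) (fun a b h => by simpa using h) B
  have h3 : Hent p (fun ω => (A ω, B ω, ())) = Hent p (fun ω => (A ω, B ω)) :=
    Hent_comp p (f := fun x : α × β => (x.1, x.2, ()))
      (fun a b h => by simpa [Prod.ext_iff] using h) (fun ω => (A ω, B ω))
  have h4 : Hent p (fun _ : Ω => ()) = 0 := by
    unfold Hent entFun distOf
    simp [hp.2]
  rw [h1, h2, h3, h4]
  ring

lemma MI_nonneg {Ω α β : Type} [Fintype Ω] [Fintype α] [Fintype β]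
    {p : Ω → ℝ} (hp : IsPMF p) (A : Ω → α) (B : Ω → β) :
    0 ≤ MI p A B := by
  rw [MI_eq_CMI hp]
  exact CMI_nonneg hp A B _

lemma CMI_comm {Ω α β γ : Type} [Fintype Ω] [Fintype α] [Fintype β] [Fintype γ]
    (p : Ω → ℝ) (A : Ω → α) (B : Ω → β) (C : Ω → γ) :
    CMI p A B C = CMI p B A C := by
  unfold CMI
  have h : Hent p (fun ω => (A ω, B ω, C ω)) = Hent p (fun ω => (B ω, A ω, C ω)) :=
    Hent_congr p (fun x : α × β × γ => (x.2.1, x.1, x.2.2))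
      (fun a b h => by simp [Prod.ext_iff] at h ⊢; tauto) (fun ω => rfl)
  rw [h]
  ring

lemma chain2 {Ω α β γ : Type} [Fintype Ω] [Fintype α] [Fintype β] [Fintype γ]
    (p : Ω → ℝ) (A : Ω → α) (B : Ω → β) (C : Ω → γ) :
    MI p (fun ω => (C ω, A ω)) B = MI p C B + CMI p A B C := by
  unfold MI CMI
  have h1 : Hent p (fun ω => (C ω, A ω)) = Hent p (fun ω => (A ω, C ω)) :=
    Hent_congr p (fun x : γ × α => (x.2, x.1))
      (fun a b h => by simp [Prod.ext_iff] at h ⊢; tauto) (fun ω => rfl)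
  have h2 : Hent p (fun ω => (C ω, B ω)) = Hent p (fun ω => (B ω, C ω)) :=
    Hent_congr p (fun x : γ × β => (x.2, x.1))
      (fun a b h => by simp [Prod.ext_iff] at h ⊢; tauto) (fun ω => rfl)
  have h3 : Hent p (fun ω => ((C ω, A ω), B ω)) = Hent p (fun ω => (A ω, B ω, C ω)) :=
    Hent_congr p (fun x : (γ × α) × β => (x.1.2, x.2, x.1.1))
      (fun a b h => by simp [Prod.ext_iff] at h ⊢; tauto) (fun ω => rfl)
  rw [h1, h2, h3]
  ring

lemma chain3 {Ω α β γ δ : Type} [Fintype Ω] [Fintype α] [Fintype β] [Fintype γ] [Fintype δ]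
    (p : Ω → ℝ) (A : Ω → α) (B : Ω → β) (C : Ω → γ) (D : Ω → δ) :
    CMI p A (fun ω => (B ω, D ω)) C
      = CMI p A B C + CMI p A D (fun ω => (C ω, B ω)) := by
  unfold CMI
  have h1 : Hent p (fun ω => ((B ω, D ω), C ω)) = Hent p (fun ω => (D ω, C ω, B ω)) :=
    Hent_congr p (fun x : (β × δ) × γ => (x.1.2, x.2, x.1.1))
      (fun a b h => by simp [Prod.ext_iff] at h ⊢; tauto) (fun ω => rfl)
  have h2 : Hent p (fun ω => (A ω, (B ω, D ω), C ω))
      = Hent p (fun ω => (A ω, D ω, C ω, B ω)) :=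
    Hent_congr p (fun x : α × (β × δ) × γ => (x.1, x.2.1.2, x.2.2, x.2.1.1))
      (fun a b h => by simp [Prod.ext_iff] at h ⊢; tauto) (fun ω => rfl)
  have h3 : Hent p (fun ω => (A ω, B ω, C ω)) = Hent p (fun ω => (A ω, C ω, B ω)) :=
    Hent_congr p (fun x : α × β × γ => (x.1, x.2.2, x.2.1))
      (fun a b h => by simp [Prod.ext_iff] at h ⊢; tauto) (fun ω => rfl)
  have h4 : Hent p (fun ω => (B ω, C ω)) = Hent p (fun ω => (C ω, B ω)) :=
    Hent_congr p (fun x : β × γ => (x.2, x.1))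
      (fun a b h => by simp [Prod.ext_iff] at h ⊢; tauto) (fun ω => rfl)
  rw [h1, h2, h3, h4]
  ring

/-- **Corollary 1 (inactive leakage constraints).** If a leakage threshold exceeds
its critical value, the corresponding leakage constraints become inactive. -/
theorem inactive_leakage {Ω A0 A1 A2 B1 B2 : Type} [Fintype Ω] [Fintype A0]
    [Fintype A1] [Fintype A2] [Fintype B1] [Fintype B2]
    (p : Ω → ℝ) (hp : IsPMF p)
    (U0 : Ω → A0) (U1 : Ω → A1) (U2 : Ω → A2) (Y1 : Ω → B1) (Y2 : Ω → B2)
    (L1 L2 : ℝ) (hL1 : 0 ≤ L1) (hL2 : 0 ≤ L2) :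
    (MI p U0 Y1 + CMI p U1 (fun ω => (U2 ω, Y2 ω)) U0 ≤ L1 →
      RtOpt p U0 U1 U2 Y1 Y2 (some L1) (some L2)
        = RtOpt p U0 U1 U2 Y1 Y2 none (some L2)) ∧
    (MI p U0 Y2 + CMI p U2 (fun ω => (U1 ω, Y1 ω)) U0 ≤ L2 →
      RtOpt p U0 U1 U2 Y1 Y2 (some L1) (some L2)
        = RtOpt p U0 U1 U2 Y1 Y2 (some L1) none) ∧
    (MI p U0 Y1 + CMI p U1 (fun ω => (U2 ω, Y2 ω)) U0 ≤ L1 →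
      MI p U0 Y2 + CMI p U2 (fun ω => (U1 ω, Y1 ω)) U0 ≤ L2 →
      RtOpt p U0 U1 U2 Y1 Y2 (some L1) (some L2)
        = RtOpt p U0 U1 U2 Y1 Y2 none none) := by
  -- identities
  have e1 : CMI p U1 (fun ω => (U2 ω, Y2 ω)) U0
      = CMI p U1 U2 U0 + CMI p U1 Y2 (fun ω => (U0 ω, U2 ω)) := chain3 p U1 U2 U0 Y2
  have e2 : CMI p U2 (fun ω => (U1 ω, Y1 ω)) U0
      = CMI p U1 U2 U0 + CMI p U2 Y1 (fun ω => (U0 ω, U1 ω)) := by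
    rw [chain3 p U2 U1 U0 Y1, CMI_comm p U2 U1 U0]
  have e3 : MI p (fun ω => (U0 ω, U1 ω)) Y1 = MI p U0 Y1 + CMI p U1 Y1 U0 :=
    chain2 p U1 Y1 U0
  have e4 : MI p (fun ω => (U0 ω, U2 ω)) Y2 = MI p U0 Y2 + CMI p U2 Y2 U0 :=
    chain2 p U2 Y2 U0
  have nn1 : 0 ≤ MI p U0 Y1 := MI_nonneg hp U0 Y1
  have nn1' : 0 ≤ MI p U0 Y2 := MI_nonneg hp U0 Y2
  have nn2 : 0 ≤ CMI p U1 U2 U0 := CMI_nonneg hp U1 U2 U0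
  -- derived clauses
  have key1 : ∀ r : ℝ × ℝ, MI p U0 Y1 + CMI p U1 (fun ω => (U2 ω, Y2 ω)) U0 ≤ L1 →
      r.1 ≤ MI p (fun ω => (U0 ω, U1 ω)) Y1 →
      r.1 + r.2 ≤ MI p (fun ω => (U0 ω, U1 ω)) Y1 + CMI p U2 Y2 U0 - CMI p U1 U2 U0 →
      (r.1 ≤ CMI p U1 Y1 U0 - CMI p U1 U2 U0
          - CMI p U1 Y2 (fun ω => (U0 ω, U2 ω)) + L1 ∧
      r.1 + r.2 ≤ MI p (fun ω => (U0 ω, U1 ω)) Y1 + CMI p U2 Y2 U0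
          - CMI p U1 U2 U0 - CMI p U1 Y2 (fun ω => (U0 ω, U2 ω)) + L1) := by
    intro r h ha hb
    constructor <;> linarith
  have key2 : ∀ r : ℝ × ℝ, MI p U0 Y2 + CMI p U2 (fun ω => (U1 ω, Y1 ω)) U0 ≤ L2 →
      r.2 ≤ MI p (fun ω => (U0 ω, U2 ω)) Y2 →
      r.1 + r.2 ≤ CMI p U1 Y1 U0 + MI p (fun ω => (U0 ω, U2 ω)) Y2 - CMI p U1 U2 U0 →
      (r.2 ≤ CMI p U2 Y2 U0 - CMI p U1 U2 U0
          - CMI p U2 Y1 (fun ω => (U0 ω, U1 ω)) + L2 ∧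
      r.1 + r.2 ≤ CMI p U1 Y1 U0 + MI p (fun ω => (U0 ω, U2 ω)) Y2
          - CMI p U1 U2 U0 - CMI p U2 Y1 (fun ω => (U0 ω, U1 ω)) + L2) := by
    intro r h ha hb
    constructor <;> linarith
  refine ⟨fun h1 => Set.ext fun r => ?_, fun h2 => Set.ext fun r => ?_,
    fun h1 h2 => Set.ext fun r => ?_⟩ <;>
    simp only [RtOpt, Set.mem_setOf_eq, Option.mem_def] <;>
    constructor
  · rintro ⟨h0, h0', _, hB, hrest⟩
    exact ⟨h0, h0', fun l1 h => (by cases h), hB, hrest⟩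
  · rintro ⟨h0, h0', _, hB, h2', h4', h6', h8'⟩
    refine ⟨h0, h0', fun l1 hl => ?_, hB, h2', h4', h6', h8'⟩
    injection hl with hl'; subst hl'
    exact key1 r h1 h2' h6'
  · rintro ⟨h0, h0', hA, _, hrest⟩
    exact ⟨h0, h0', hA, fun l2 h => (by cases h), hrest⟩
  · rintro ⟨h0, h0', hA, _, h2', h4', h6', h8'⟩
    refine ⟨h0, h0', hA, fun l2 hl => ?_, h2', h4', h6', h8'⟩
    injection hl with hl'; subst hl'
    exact key2 r h2 h4' h8'
  · rintro ⟨h0, h0', _, _, hrest⟩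
    exact ⟨h0, h0', fun l1 h => (by cases h), fun l2 h => (by cases h), hrest⟩
  · rintro ⟨h0, h0', _, _, h2', h4', h6', h8'⟩
    refine ⟨h0, h0', fun l1 hl => ?_, fun l2 hl => ?_, h2', h4', h6', h8'⟩
    · injection hl with hl'; subst hl'
      exact key1 r h1 h2' h6'
    · injection hl with hl'; subst hl'
      exact key2 r h2 h4' h8'
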